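/- Let a > 0, b ∈ ℝ, σ > 0, let f₀(x) = (a/σ²) exp(−2a|x − b|/σ²) with distribution function F₀(x) = ∫_{−∞}^{x} f₀(y) dy, and define Φ(x) = ∫_ℝ (𝟙{y > x} − F₀(y))² / (σ² f₀(y)) dy. Then for every x ≥ b, writing U = 2a(x − b)/σ², one has Φ(x) = (σ²/(2a²)) · (e^{U} − U − 1/2). In particular Φ(x) = (σ²/(2a²)) e^{2a(x−b)/σ²}(1 + o(1)) as x → ∞. -/

import Mathlib

open MeasureTheory Set Filter Topology ENNReal

lemma exp_lin_intervalIntegral {c : ℝ} (d A B : ℝ) (hc : c ≠ 0) :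
    ∫ t in A..B, Real.exp (c * t + d) = (Real.exp (c * B + d) - Real.exp (c * A + d)) / c := by
  have hderiv : ∀ t ∈ uIcc A B, HasDerivAt (fun t => Real.exp (c * t + d) / c)
      (Real.exp (c * t + d)) t := by
    intro t _
    have h1 : HasDerivAt (fun t : ℝ => c * t + d) c t := by
      simpa using ((hasDerivAt_id t).const_mul c).add_const d
    have h2 := (h1.exp).div_const c
    rwa [mul_div_cancel_right₀ _ hc] at h2
  rw [intervalIntegral.integral_eq_sub_of_hasDerivAt hderiv
    ((Real.continuous_exp.comp (by continuity)).intervalIntegrable A B)]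
  ring

lemma integrableOn_exp_lin_Ioi {c : ℝ} (d X : ℝ) (hc : 0 < c) :
    IntegrableOn (fun y => Real.exp (-(c * y) + d)) (Ioi X) := by
  have h := (exp_neg_integrableOn_Ioi X hc).const_mul (Real.exp d)
  refine MeasureTheory.IntegrableOn.congr_fun h (fun y _ => ?_) measurableSet_Ioi
  rw [← Real.exp_add]; ring_nf

lemma integral_exp_lin_Ioi {c : ℝ} (d X : ℝ) (hc : 0 < c) :
    ∫ y in Ioi X, Real.exp (-(c * y) + d) = Real.exp (-(c * X) + d) / c := by
  have h := MeasureTheory.integral_comp_mul_left_Ioi (fun u => Real.exp (-u + d)) X hc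
  simp only [smul_eq_mul] at h
  rw [show (fun x => Real.exp (-(c * x) + d)) = (fun x => Real.exp (-(c*x) + d)) from rfl]
  have h2 : ∫ u in Ioi (c * X), Real.exp (-u + d) = Real.exp d * Real.exp (-(c*X)) := by
    have : ∀ u : ℝ, Real.exp (-u + d) = Real.exp d * Real.exp (-u) := by
      intro u; rw [← Real.exp_add]; ring_nf
    simp_rw [this]
    rw [integral_const_mul, integral_exp_neg_Ioi]
  calc ∫ y in Ioi X, Real.exp (-(c * y) + d) = c⁻¹ * ∫ u in Ioi (c * X), Real.exp (-u + d) := h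
    _ = Real.exp (-(c * X) + d) / c := by
        rw [h2, ← Real.exp_add]
        rw [show d + -(c*X) = -(c*X) + d by ring]
        ring

lemma integrableOn_exp_lin_Iic {c : ℝ} (d B : ℝ) (hc : 0 < c) :
    IntegrableOn (fun y => Real.exp (c * y + d)) (Iic B) := by
  have m : MeasurableEmbedding fun x : ℝ => -x := (Homeomorph.neg ℝ).measurableEmbedding
  rw [← Measure.map_neg_eq_self (volume : Measure ℝ), m.integrableOn_map_iff]
  have : ((fun y => Real.exp (c * y + d)) ∘ fun x : ℝ => -x) = fun x => Real.exp (-(c*x) + d) := by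
    ext x; simp only [Function.comp]; ring_nf
  rw [this, show (fun x : ℝ => -x) ⁻¹' Iic B = Ici (-B) by ext x; simp [neg_le]]
  exact Iff.mpr integrableOn_Ici_iff_integrableOn_Ioi (integrableOn_exp_lin_Ioi d (-B) hc)

lemma integral_exp_lin_Iic {c : ℝ} (d B : ℝ) (hc : 0 < c) :
    ∫ y in Iic B, Real.exp (c * y + d) = Real.exp (c * B + d) / c := by
  have h := integral_comp_neg_Iic B (fun u => Real.exp (-(c * u) + d))
  have h1 : ∫ y in Iic B, Real.exp (c * y + d) = ∫ u in Ioi (-B), Real.exp (-(c * u) + d) := by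
    rw [← h]; congr 1; ext y; ring_nf
  rw [h1, integral_exp_lin_Ioi d (-B) hc]
  ring_nf

theorem stmt_15
    (a b σ : ℝ) (ha : 0 < a) (hσ : 0 < σ)
    (f₀ : ℝ → ℝ)
    (hf₀ : ∀ x, f₀ x = a / σ ^ 2 * Real.exp (-2 * a * |x - b| / σ ^ 2))
    (F₀ : ℝ → ℝ) (hF₀ : ∀ x, F₀ x = ∫ y in Iic x, f₀ y)
    (Φ : ℝ → ℝ≥0∞)
    (hΦ : ∀ x, Φ x = ∫⁻ y, ENNReal.ofReal
        (((Ioi x).indicator (fun _ => (1 : ℝ)) y - F₀ y) ^ 2 / (σ ^ 2 * f₀ y))) :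
    (∀ x, b ≤ x →
      (Φ x).toReal = σ ^ 2 / (2 * a ^ 2) *
        (Real.exp (2 * a * (x - b) / σ ^ 2) - 2 * a * (x - b) / σ ^ 2 - 1 / 2)) ∧
    Tendsto (fun x => (Φ x).toReal /
        (σ ^ 2 / (2 * a ^ 2) * Real.exp (2 * a * (x - b) / σ ^ 2)))
      atTop (𝓝 1) := by
  have hσ2 : (0:ℝ) < σ ^ 2 := by positivity
  set c : ℝ := 2 * a / σ ^ 2 with hc_def
  have hc : 0 < c := by positivity
  have hf₀' : ∀ y, f₀ y = c / 2 * Real.exp (-(c * |y - b|)) := by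
    intro y
    have h1 : a / σ ^ 2 = c / 2 := by rw [hc_def]; ring
    have h2 : -2 * a * |y - b| / σ ^ 2 = -(c * |y - b|) := by rw [hc_def]; ring
    rw [hf₀ y, h1, h2]
  have hf₀pos : ∀ y, 0 < f₀ y := by
    intro y; rw [hf₀']; positivity
  -- F₀ on the left of b
  have hF₀le : ∀ y, y ≤ b → F₀ y = Real.exp (c * (y - b)) / 2 := by
    intro y hy
    rw [hF₀]
    have hcong : ∀ t ∈ Iic y, f₀ t = c / 2 * Real.exp (c * t + -(c * b)) := by
      intro t ht
      rw [hf₀' t, abs_of_nonpos (by simp only [mem_Iic] at ht; linarith)]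
      congr 1; ring
    rw [setIntegral_congr_fun measurableSet_Iic hcong, integral_const_mul,
      integral_exp_lin_Iic (-(c*b)) y hc, show c * y + -(c * b) = c * (y - b) by ring]
    field_simp
  have hF₀b : (∫ t in Iic b, f₀ t) = 1 / 2 := by
    rw [← hF₀ b, hF₀le b le_rfl]; simp
  -- integrability of f₀ pieces
  have hf₀cont : Continuous f₀ := by
    have : f₀ = fun y => c / 2 * Real.exp (-(c * |y - b|)) := funext hf₀'
    rw [this]; fun_prop
  have hF₀ge : ∀ y, b ≤ y → F₀ y = 1 - Real.exp (-(c * (y - b))) / 2 := by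
    intro y hy
    rw [hF₀]
    have hIic : IntegrableOn f₀ (Iic b) := by
      refine MeasureTheory.IntegrableOn.congr_fun
        ((integrableOn_exp_lin_Iic (-(c*b)) b hc).const_mul (c/2))
        (fun t ht => ?_) measurableSet_Iic
      rw [hf₀' t, abs_of_nonpos (by simp only [mem_Iic] at ht; linarith)]
      congr 1; ring
    have hIoc : IntegrableOn f₀ (Ioc b y) := hf₀cont.integrableOn_Ioc
    rw [← Iic_union_Ioc_eq_Iic hy,
      setIntegral_union (Iic_disjoint_Ioc le_rfl) measurableSet_Ioc hIic hIoc, hF₀b]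
    have hmid : ∫ t in Ioc b y, f₀ t = 1 / 2 - Real.exp (-(c * (y - b))) / 2 := by
      rw [← intervalIntegral.integral_of_le hy]
      have hcong : EqOn f₀ (fun t => c / 2 * Real.exp (-c * t + c * b)) (uIcc b y) := by
        intro t ht
        rw [uIcc_of_le hy] at ht
        rw [hf₀' t, abs_of_nonneg (by linarith [ht.1])]
        congr 1; ring
      rw [intervalIntegral.integral_congr hcong, intervalIntegral.integral_const_mul,
        exp_lin_intervalIntegral (c*b) b y (by exact neg_ne_zero.mpr hc.ne')]
      rw [show -c * y + c * b = -(c * (y - b)) by ring, show -c * b + c * b = 0 by ring,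
        Real.exp_zero]
      field_simp
      ring
    rw [hmid]; ring
  -- the main computation for fixed x ≥ b
  have key : ∀ x, b ≤ x →
      (Φ x).toReal = σ ^ 2 / (2 * a ^ 2) *
        (Real.exp (2 * a * (x - b) / σ ^ 2) - 2 * a * (x - b) / σ ^ 2 - 1 / 2) := by
    intro x hbx
    set g : ℝ → ℝ := fun y =>
      ((Ioi x).indicator (fun _ => (1 : ℝ)) y - F₀ y) ^ 2 / (σ ^ 2 * f₀ y) with hg_def
    have hg_nonneg : ∀ y, 0 ≤ g y := by
      intro y
      exact div_nonneg (sq_nonneg _) (mul_nonneg hσ2.le (hf₀pos y).le)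
    -- region formulas
    have hg1 : ∀ y ∈ Iic b, g y = 1 / (2 * σ ^ 2 * c) * Real.exp (c * y + -(c * b)) := by
      intro y hy
      simp only [mem_Iic] at hy
      have hind : (Ioi x).indicator (fun _ => (1 : ℝ)) y = 0 :=
        indicator_of_notMem (by simp only [mem_Ioi, not_lt]; linarith) _
      rw [hg_def]
      simp only
      rw [hind, hF₀le y hy, hf₀' y, abs_of_nonpos (by linarith),
        show -(c * -(y - b)) = c * (y - b) by ring,
        show c * y + -(c * b) = c * (y - b) by ring]
      have hE := Real.exp_pos (c * (y - b))
      field_simp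
      ring
    have hg2 : ∀ y ∈ Ioc b x, g y =
        2 / (σ ^ 2 * c) * (Real.exp (c * y + -(c * b)) - 1 + Real.exp (-c * y + c * b) / 4) := by
      intro y hy
      have hind : (Ioi x).indicator (fun _ => (1 : ℝ)) y = 0 :=
        indicator_of_notMem (by simp only [mem_Ioi, not_lt]; exact hy.2) _
      rw [hg_def]
      simp only
      rw [hind, hF₀ge y hy.1.le, hf₀' y, abs_of_nonneg (by linarith [hy.1]),
        show -c * y + c * b = -(c * (y - b)) by ring,
        show c * y + -(c * b) = c * (y - b) by ring,
        Real.exp_neg]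
      have hE := Real.exp_pos (c * (y - b))
      field_simp
      ring
    have hg3 : ∀ y ∈ Ioi x, g y = 1 / (2 * σ ^ 2 * c) * Real.exp (-(c * y) + c * b) := by
      intro y hy
      simp only [mem_Ioi] at hy
      have hind : (Ioi x).indicator (fun _ => (1 : ℝ)) y = 1 :=
        indicator_of_mem (by simp only [mem_Ioi]; linarith) _
      rw [hg_def]
      simp only
      rw [hind, hF₀ge y (by linarith), hf₀' y, abs_of_nonneg (by linarith),
        show -(c * y) + c * b = -(c * (y - b)) by ring, Real.exp_neg]
      have hE := Real.exp_pos (c * (y - b))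
      field_simp
      ring
    -- integrability on pieces
    have hint1 : IntegrableOn g (Iic b) :=
      MeasureTheory.IntegrableOn.congr_fun
        ((integrableOn_exp_lin_Iic (-(c*b)) b hc).const_mul _)
        (fun y hy => (hg1 y hy).symm) measurableSet_Iic
    have hgcont : Continuous fun y =>
        2 / (σ ^ 2 * c) * (Real.exp (c * y + -(c * b)) - 1 + Real.exp (-c * y + c * b) / 4) := by
      fun_prop
    have hint2 : IntegrableOn g (Ioc b x) :=
      MeasureTheory.IntegrableOn.congr_fun hgcont.integrableOn_Ioc
        (fun y hy => (hg2 y hy).symm) measurableSet_Ioc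
    have hint3 : IntegrableOn g (Ioi x) :=
      MeasureTheory.IntegrableOn.congr_fun
        ((integrableOn_exp_lin_Ioi (c*b) x hc).const_mul _)
        (fun y hy => (hg3 y hy).symm) measurableSet_Ioi
    have hintIicx : IntegrableOn g (Iic x) := by
      rw [← Iic_union_Ioc_eq_Iic hbx]; exact hint1.union hint2
    have hint : Integrable g := by
      rw [← integrableOn_univ, ← Iic_union_Ioi (a := x)]
      exact hintIicx.union hint3
    have key_int : (Φ x).toReal = ∫ y, g y := by
      rw [hΦ x, ← ofReal_integral_eq_lintegral_ofReal hint
        (Filter.Eventually.of_forall hg_nonneg)]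
      exact ENNReal.toReal_ofReal (integral_nonneg hg_nonneg)
    -- split
    have e2 : ∫ y, g y = (∫ y in Iic x, g y) + ∫ y in Ioi x, g y := by
      rw [← setIntegral_univ, ← Iic_union_Ioi (a := x),
        setIntegral_union (Iic_disjoint_Ioi le_rfl) measurableSet_Ioi hintIicx hint3]
    have e1 : ∫ y in Iic x, g y = (∫ y in Iic b, g y) + ∫ y in Ioc b x, g y := by
      rw [← Iic_union_Ioc_eq_Iic hbx,
        setIntegral_union (Iic_disjoint_Ioc le_rfl) measurableSet_Ioc hint1 hint2]
    -- compute the three pieces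
    have I1 : ∫ y in Iic b, g y = 1 / (2 * σ ^ 2 * c ^ 2) := by
      rw [setIntegral_congr_fun measurableSet_Iic hg1, integral_const_mul,
        integral_exp_lin_Iic (-(c*b)) b hc,
        show c * b + -(c * b) = 0 by ring, Real.exp_zero]
      field_simp
    have I3 : ∫ y in Ioi x, g y = Real.exp (-(c * (x - b))) / (2 * σ ^ 2 * c ^ 2) := by
      rw [setIntegral_congr_fun measurableSet_Ioi hg3, integral_const_mul,
        integral_exp_lin_Ioi (c*b) x hc,
        show -(c * x) + c * b = -(c * (x - b)) by ring]
      field_simp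
    have I2 : ∫ y in Ioc b x, g y = 2 / (σ ^ 2 * c) *
        ((Real.exp (c * (x - b)) - 1) / c - (x - b) +
          (1 - Real.exp (-(c * (x - b)))) / (4 * c)) := by
      rw [setIntegral_congr_fun measurableSet_Ioc hg2, ← intervalIntegral.integral_of_le hbx,
        intervalIntegral.integral_const_mul]
      congr 1
      have i1 : IntervalIntegrable (fun y => Real.exp (c * y + -(c * b))) volume b x :=
        (by fun_prop : Continuous fun y => Real.exp (c * y + -(c * b))).intervalIntegrable b x
      have i2 : IntervalIntegrable (fun _ : ℝ => (1:ℝ)) volume b x :=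
        intervalIntegrable_const
      have i3 : IntervalIntegrable (fun y => Real.exp (-c * y + c * b) / 4) volume b x :=
        (by fun_prop : Continuous fun y => Real.exp (-c * y + c * b) / 4).intervalIntegrable b x
      rw [intervalIntegral.integral_add (i1.sub i2) i3, intervalIntegral.integral_sub i1 i2,
        intervalIntegral.integral_div,
        exp_lin_intervalIntegral (-(c*b)) b x hc.ne',
        exp_lin_intervalIntegral (c := -c) (c*b) b x (neg_ne_zero.mpr hc.ne'),
        intervalIntegral.integral_const]
      rw [show c * x + -(c * b) = c * (x - b) by ring, show c * b + -(c * b) = 0 by ring,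
        show -c * x + c * b = -(c * (x - b)) by ring, show -c * b + c * b = 0 by ring,
        Real.exp_zero]
      field_simp
      ring
    -- combine
    rw [key_int, e2, e1, I1, I2, I3]
    have hU : c * (x - b) = 2 * a * (x - b) / σ ^ 2 := by rw [hc_def]; ring
    rw [hU, Real.exp_neg]
    have hE := Real.exp_pos (2 * a * (x - b) / σ ^ 2)
    rw [hc_def]
    field_simp
    ring
  refine ⟨key, ?_⟩
  -- the limit
  have hUtop : Tendsto (fun x => 2 * a * (x - b) / σ ^ 2) atTop atTop := by
    apply Tendsto.atTop_div_const hσ2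
    exact (tendsto_atTop_add_const_right atTop (-b) tendsto_id).const_mul_atTop (by positivity)
  have hmain : Tendsto (fun U : ℝ => 1 - U * Real.exp (-U) - Real.exp (-U) / 2)
      atTop (𝓝 1) := by
    have h1 : Tendsto (fun U : ℝ => U * Real.exp (-U)) atTop (𝓝 0) := by
      simpa using Real.tendsto_pow_mul_exp_neg_atTop_nhds_zero 1
    have h2 : Tendsto (fun U : ℝ => Real.exp (-U) / 2) atTop (𝓝 0) := by
      simpa using Real.tendsto_exp_neg_atTop_nhds_zero.div_const 2
    have := ((tendsto_const_nhds (x := (1:ℝ)) (f := atTop)).sub h1).sub h2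
    simpa using this
  refine (hmain.comp hUtop).congr' ?_
  filter_upwards [eventually_ge_atTop b] with x hx
  rw [Function.comp_apply, key x hx]
  set U := 2 * a * (x - b) / σ ^ 2 with hU_def
  have hE := Real.exp_pos U
  have hK : σ ^ 2 / (2 * a ^ 2) ≠ 0 := by positivity
  rw [Real.exp_neg]
  field_simp
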